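/- The beam energy E(U) = (EA/2L)(v1⁺−v1⁻)² + (EI/2L)(θ⁺−θ⁻)² + (6EI/L)((v2⁺−v2⁻)/L − (θ⁻+θ⁺)/2)² on (v⁻,θ⁻,v⁺,θ⁺) ∈ ℝ²×ℝ×ℝ²×ℝ is a nonnegative quadratic form whose kernel is exactly the three-dimensional space of linearized rigid motions {(c + w x⁻, ω, c + w x⁺, ω) : c ∈ ℝ², ω ∈ ℝ}, where x⁻ = (0,0), x⁺ = (L,0), and w = ((0,−ω),(ω,0)). -/

import Mathlib

/-- Energy of a planar straight beam of length `L`, axial stiffness `EA`,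
bending stiffness `EI`, with endpoint deflections `vm, vp : ℝ × ℝ` and
endpoint rotations `tm, tp : ℝ`. -/
noncomputable def beamE (EA EI L : ℝ) (vm : ℝ × ℝ) (tm : ℝ) (vp : ℝ × ℝ) (tp : ℝ) : ℝ :=
  EA / (2 * L) * (vp.1 - vm.1) ^ 2 + EI / (2 * L) * (tp - tm) ^ 2 +
    6 * EI / L * ((vp.2 - vm.2) / L - (tm + tp) / 2) ^ 2

/-- Action of the skew matrix `w = ((0,−ω),(ω,0))` on a point `x ∈ ℝ²`. -/
def skewAct (ω : ℝ) (x : ℝ × ℝ) : ℝ × ℝ := (-ω * x.2, ω * x.1)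

/-- The beam energy is a nonnegative quadratic form whose kernel is exactly
the three-dimensional space of linearized rigid motions
`(c + w x⁻, ω, c + w x⁺, ω)` with `x⁻ = (0,0)`, `x⁺ = (L,0)`. -/
theorem beamE_nonneg_and_kernel (EA EI L : ℝ) (hEA : 0 < EA) (hEI : 0 < EI) (hL : 0 < L)
    (vm vp : ℝ × ℝ) (tm tp : ℝ) :
    0 ≤ beamE EA EI L vm tm vp tp ∧
      (beamE EA EI L vm tm vp tp = 0 ↔
        ∃ (c : ℝ × ℝ) (ω : ℝ),
          vm = c + skewAct ω (0, 0) ∧ tm = ω ∧ vp = c + skewAct ω (L, 0) ∧ tp = ω) := by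
  have h1 : 0 < EA / (2 * L) := by positivity
  have h2 : 0 < EI / (2 * L) := by positivity
  have h3 : 0 < 6 * EI / L := by positivity
  have key : ∀ a b : ℝ, 0 < a → 0 ≤ a * b ^ 2 := fun a b ha => by positivity
  constructor
  · unfold beamE
    have := key _ (vp.1 - vm.1) h1
    have := key _ (tp - tm) h2
    have := key _ ((vp.2 - vm.2) / L - (tm + tp) / 2) h3
    linarith
  constructor
  · intro h
    unfold beamE at h
    have e1 : EA / (2 * L) * (vp.1 - vm.1) ^ 2 = 0 := by
      nlinarith [key _ (vp.1 - vm.1) h1, key _ (tp - tm) h2,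
        key _ ((vp.2 - vm.2) / L - (tm + tp) / 2) h3]
    have e2 : EI / (2 * L) * (tp - tm) ^ 2 = 0 := by
      nlinarith [key _ (vp.1 - vm.1) h1, key _ (tp - tm) h2,
        key _ ((vp.2 - vm.2) / L - (tm + tp) / 2) h3]
    have e3 : 6 * EI / L * ((vp.2 - vm.2) / L - (tm + tp) / 2) ^ 2 = 0 := by
      nlinarith [key _ (vp.1 - vm.1) h1, key _ (tp - tm) h2,
        key _ ((vp.2 - vm.2) / L - (tm + tp) / 2) h3]
    have f1 : vp.1 = vm.1 := by
      have := (mul_eq_zero.mp e1).resolve_left (ne_of_gt h1)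
      have := pow_eq_zero_iff (n := 2) (by norm_num) |>.mp this
      linarith
    have f2 : tp = tm := by
      have := (mul_eq_zero.mp e2).resolve_left (ne_of_gt h2)
      have := pow_eq_zero_iff (n := 2) (by norm_num) |>.mp this
      linarith
    have f3 : (vp.2 - vm.2) / L - (tm + tp) / 2 = 0 := by
      have := (mul_eq_zero.mp e3).resolve_left (ne_of_gt h3)
      exact pow_eq_zero_iff (n := 2) (by norm_num) |>.mp this
    have f4 : vp.2 = vm.2 + tm * L := by
      subst f2
      field_simp at f3
      nlinarith
    refine ⟨vm, tm, ?_, rfl, ?_, f2⟩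
    · simp [skewAct, Prod.ext_iff]
    · simp [skewAct, Prod.ext_iff, f1, f4, add_comm, mul_comm]
  · rintro ⟨c, ω, hm, htm, hp, htp⟩
    subst htm htp
    simp [skewAct, Prod.ext_iff] at hm hp
    unfold beamE
    rw [hm.1, hm.2, hp.1, hp.2]
    have : (c.2 + tp * L - c.2) / L - (tp + tp) / 2 = 0 := by
      field_simp
      ring
    rw [this]
    ring
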